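/- Let d ≥ 1 be an integer. For every finite nonempty subset D ⊆ ℤ^d, the inner boundary with respect to the standard generating set satisfies (|∂D| : ℝ) ≥ |D|^{(d−1)/d}; equivalently, |∂D|/|D| ≥ |D|^{−1/d}. -/

import Mathlib

open scoped ENNReal NNReal
open MeasureTheory Function Set

/-- The inner boundary of a finite subset of `ℤ^d` with respect to the standard
generating set `{±e_1, …, e_d}`. -/
def innerBoundaryZ (d : ℕ) (D : Finset (Fin d → ℤ)) : Finset (Fin d → ℤ) :=
  D.filter fun x => ∃ j : Fin d, x + Pi.single j 1 ∉ D ∨ x - Pi.single j 1 ∉ D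

/-- In each grid line through a point of `D` there is a "top" point of `D`. -/
lemma exists_run_top (d : ℕ) (D : Finset (Fin d → ℤ)) {x : Fin d → ℤ} (hx : x ∈ D)
    (j : Fin d) : ∃ t : ℤ, Function.update x j t ∈ D ∧
      Function.update x j t + Pi.single j 1 ∉ D := by
  classical
  set A : Finset ℤ := (D.image fun y => y j).filter (fun t => Function.update x j t ∈ D) with hA
  have hxA : x j ∈ A := by
    refine Finset.mem_filter.2 ⟨Finset.mem_image.2 ⟨x, hx, rfl⟩, ?_⟩
    rwa [Function.update_eq_self]
  have hne : A.Nonempty := ⟨_, hxA⟩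
  refine ⟨A.max' hne, (Finset.mem_filter.1 (A.max'_mem hne)).2, fun hmem => ?_⟩
  have key : Function.update x j (A.max' hne) + Pi.single j 1
      = Function.update x j (A.max' hne + 1) := by
    funext i
    by_cases h : i = j
    · subst h; simp
    · simp [Function.update_of_ne h, Pi.single_eq_of_ne h]
  rw [key] at hmem
  have hmem' : A.max' hne + 1 ∈ A := by
    refine Finset.mem_filter.2 ⟨Finset.mem_image.2 ⟨_, hmem, ?_⟩, hmem⟩
    simp
  have := Finset.le_max' A _ hmem'
  omega

instance : SigmaFinite (Measure.count : Measure ℤ) :=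
  Measure.sigmaFinite_of_countable (Set.countable_range fun n : ℤ => ({n} : Set ℤ))
    (by rintro s ⟨n, rfl⟩; simp)
    (by ext x; simp)

theorem stmt7 (d : ℕ) (hd : 1 ≤ d) (D : Finset (Fin d → ℤ)) (hD : D.Nonempty) :
    (D.card : ℝ) ^ (((d : ℝ) - 1) / (d : ℝ)) ≤ ((innerBoundaryZ d D).card : ℝ) := by
  classical
  -- the "upper boundary"
  set U : Finset (Fin d → ℤ) := D.filter (fun x => ∃ j : Fin d, x + Pi.single j 1 ∉ D) with hU
  have hUB : U ⊆ innerBoundaryZ d D := by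
    intro x hx
    rcases Finset.mem_filter.1 hx with ⟨hxD, j, hj⟩
    exact Finset.mem_filter.2 ⟨hxD, j, Or.inl hj⟩
  have hUcard : (U.card : ℝ) ≤ ((innerBoundaryZ d D).card : ℝ) := by
    exact_mod_cast Finset.card_le_card hUB
  -- U is nonempty
  obtain ⟨x₀, hx₀⟩ := hD
  have hdpos : 0 < d := hd
  obtain ⟨t₀, ht₀D, ht₀B⟩ := exists_run_top d D hx₀ ⟨0, hdpos⟩
  have hUne : U.Nonempty := ⟨_, Finset.mem_filter.2 ⟨ht₀D, ⟨0, hdpos⟩, ht₀B⟩⟩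
  rcases eq_or_lt_of_le hd with hd1 | hd2
  · -- case d = 1
    have : ((d : ℝ) - 1) / (d : ℝ) = 0 := by rw [← hd1]; norm_num
    rw [this, Real.rpow_zero]
    have : 1 ≤ (innerBoundaryZ d D).card := Finset.card_pos.2 ⟨_, hUB hUne.choose_spec⟩
    exact_mod_cast this
  · -- case d ≥ 2
    have hd2' : (2 : ℝ) ≤ (d : ℝ) := by exact_mod_cast hd2
    have hdR : (1 : ℝ) < (d : ℝ) := by linarith
    set p : ℝ := (d : ℝ) / ((d : ℝ) - 1) with hp
    have hconj : ((d : ℝ)).HolderConjugate p := Real.HolderConjugate.conjExponent hdR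
    -- the measure
    set μ : Fin d → Measure ℤ := fun _ => Measure.count with hμ
    have hpi : Measure.pi μ = (Measure.count : Measure (Fin d → ℤ)) := by
      refine Measure.ext_iff_singleton.2 fun a => ?_
      have hsing : ({a} : Set (Fin d → ℤ)) = Set.pi Set.univ fun i => {a i} := by
        ext y; simp [funext_iff, Set.mem_univ_pi]
      rw [Measure.count_singleton, hsing, Measure.pi_pi]
      simp [hμ, Measure.count_singleton]
    set f : (Fin d → ℤ) → ℝ≥0∞ := Set.indicator (↑U) (fun _ => (1 : ℝ≥0∞)) with hf
    have hfm : Measurable f := measurable_of_countable f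
    have hcard : (Fintype.card (Fin d) : ℝ) = (d : ℝ) := by simp
    have key := MeasureTheory.lintegral_prod_lintegral_pow_le μ (p := p)
      (by rw [Fintype.card_fin]; exact hconj) hfm
    -- lower bound for the LHS
    have hLHS : (D.card : ℝ≥0∞) ≤
        ∫⁻ x, ∏ i, (∫⁻ xᵢ, f (Function.update x i xᵢ) ∂μ i) ^
          ((1 : ℝ) / ((Fintype.card (Fin d) : ℝ) - 1)) ∂Measure.pi μ := by
      rw [hpi, MeasureTheory.lintegral_count]
      calc (D.card : ℝ≥0∞) = ∑ x ∈ D, (1 : ℝ≥0∞) := by simp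
        _ ≤ ∑ x ∈ D, ∏ i, (∫⁻ xᵢ, f (Function.update x i xᵢ) ∂μ i) ^
              ((1 : ℝ) / ((Fintype.card (Fin d) : ℝ) - 1)) := by
            refine Finset.sum_le_sum fun x hx => ?_
            refine Finset.one_le_prod' fun i _ => ?_
            have hint : (1 : ℝ≥0∞) ≤ ∫⁻ xᵢ, f (Function.update x i xᵢ) ∂μ i := by
              obtain ⟨t, htD, htB⟩ := exists_run_top d D hx i
              have htU : Function.update x i t ∈ U :=
                Finset.mem_filter.2 ⟨htD, i, htB⟩
              have : f (Function.update x i t) = 1 := by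
                rw [hf]; exact Set.indicator_of_mem (by exact_mod_cast htU) _
              calc (1 : ℝ≥0∞) = f (Function.update x i t) := this.symm
                _ ≤ ∑' s, f (Function.update x i s) := ENNReal.le_tsum t
                _ = ∫⁻ xᵢ, f (Function.update x i xᵢ) ∂μ i := by
                    rw [hμ]; exact (MeasureTheory.lintegral_count _).symm
            have hexp : (0 : ℝ) ≤ (1 : ℝ) / ((Fintype.card (Fin d) : ℝ) - 1) := by
              rw [Fintype.card_fin]; exact div_nonneg zero_le_one (by linarith)
            calc (1 : ℝ≥0∞) = 1 ^ ((1 : ℝ) / ((Fintype.card (Fin d) : ℝ) - 1)) := by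
                  rw [ENNReal.one_rpow]
              _ ≤ _ := ENNReal.rpow_le_rpow hint hexp
        _ ≤ ∑' x, ∏ i, (∫⁻ xᵢ, f (Function.update x i xᵢ) ∂μ i) ^
              ((1 : ℝ) / ((Fintype.card (Fin d) : ℝ) - 1)) := ENNReal.sum_le_tsum D
    -- upper bound for the RHS
    have hRHS : (∫⁻ x, f x ∂Measure.pi μ) = (U.card : ℝ≥0∞) := by
      rw [hpi, hf, MeasureTheory.lintegral_indicator (MeasurableSet.of_discrete)]
      simp [Measure.count_apply_finset]
    have hmain : (D.card : ℝ≥0∞) ≤ (U.card : ℝ≥0∞) ^ p := by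
      calc (D.card : ℝ≥0∞) ≤ _ := hLHS
        _ ≤ (∫⁻ x, f x ∂Measure.pi μ) ^ p := key
        _ = (U.card : ℝ≥0∞) ^ p := by rw [hRHS]
    have hppos : (0 : ℝ) ≤ p := hconj.symm.pos.le
    have hmainR : (D.card : ℝ) ≤ (U.card : ℝ) ^ p := by
      have hne : ((U.card : ℝ≥0∞)) ^ p ≠ ⊤ :=
        ENNReal.rpow_ne_top_of_nonneg hppos (by simp)
      have := ENNReal.toReal_mono hne hmain
      rwa [← ENNReal.toReal_rpow, ENNReal.toReal_natCast, ENNReal.toReal_natCast] at this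
    -- conclude
    have hq : (0 : ℝ) ≤ ((d : ℝ) - 1) / (d : ℝ) := div_nonneg (by linarith) (by positivity)
    have h1 : (D.card : ℝ) ^ (((d : ℝ) - 1) / (d : ℝ)) ≤
        ((U.card : ℝ) ^ p) ^ (((d : ℝ) - 1) / (d : ℝ)) :=
      Real.rpow_le_rpow (by positivity) hmainR hq
    have hU0 : (0 : ℝ) ≤ (U.card : ℝ) := by positivity
    have h2 : ((U.card : ℝ) ^ p) ^ (((d : ℝ) - 1) / (d : ℝ)) = (U.card : ℝ) := by
      rw [← Real.rpow_mul hU0]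
      have hd0 : (d : ℝ) ≠ 0 := by positivity
      have hd1 : (d : ℝ) - 1 ≠ 0 := by linarith
      have hpq : p * (((d : ℝ) - 1) / (d : ℝ)) = 1 := by
        rw [hp]; field_simp
      rw [hpq, Real.rpow_one]
    calc (D.card : ℝ) ^ (((d : ℝ) - 1) / (d : ℝ)) ≤ _ := h1
      _ = (U.card : ℝ) := h2
      _ ≤ _ := hUcard
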